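/- If v is a complete valuation on the lattice of downsets of a finite poset P with weight function w, then for all x, y ∈ P with v(↓x) < v(↓y) and x not strictly below y in P, we have w(x) < w(y). -/

import Mathlib

open Finset

variable (P : Type*) [PartialOrder P] [Fintype P] [DecidableEq P]

/-- The lattice of downsets (lower sets) of a finite poset `P`. -/
def DownSet : Type _ := {A : Finset P // IsLowerSet (↑A : Set P)}

variable {P}

instance : Lattice (DownSet P) :=
  Subtype.lattice (fun _ _ hA hB => by simpa [Finset.sup_eq_union] using hA.union hB)
    (fun _ _ hA hB => by simpa [Finset.inf_eq_inter] using hA.inter hB)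

instance : OrderBot (DownSet P) :=
  Subtype.orderBot (by simp [Finset.bot_eq_empty, isLowerSet_empty])

noncomputable instance : Fintype (DownSet P) :=
  Fintype.ofInjective Subtype.val Subtype.val_injective

/-- The valuation associated to a weight function `w`. -/
def vval (w : P → ℕ) (A : DownSet P) : ℕ := ∑ x ∈ A.1, w x

variable [DecidableRel ((· ≤ ·) : P → P → Prop)]

/-- The principal downset of `y`. -/
def pd (y : P) : DownSet P :=
  ⟨univ.filter (· ≤ y), by
    intro a b hba ha
    simp only [coe_filter, Set.mem_setOf_eq, mem_univ, true_and] at *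
    exact hba.trans ha⟩

/-- The dual valuation evaluated on the principal upset of `x`. -/
def vup (w : P → ℕ) (x : P) : ℕ := ∑ z ∈ univ.filter (fun z => x ≤ z), w z

/-- `T` is an initial segment for the valuation `v`. -/
def Initial (v : DownSet P → ℕ) (T : Set (DownSet P)) : Prop :=
  ∃ j, v '' T = {k | k < j}

/-- `T` is a final segment for the valuation `v`. -/
def Final (v : DownSet P → ℕ) (T : Set (DownSet P)) : Prop :=
  ∃ j, v '' T = {k | j ≤ k ∧ k < Fintype.card (DownSet P)}

/-- The set of arbitrary (nonempty) joins of elements of `T`. -/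
def joinSet (T : Set (DownSet P)) : Set (DownSet P) :=
  {a | ∃ S : Finset (DownSet P), ↑S ⊆ T ∧ ∃ hS : S.Nonempty, a = S.sup' hS id}

/-- The set of arbitrary (nonempty) meets of elements of `T`. -/
def meetSet (T : Set (DownSet P)) : Set (DownSet P) :=
  {a | ∃ S : Finset (DownSet P), ↑S ⊆ T ∧ ∃ hS : S.Nonempty, a = S.inf' hS id}

/-- A complete valuation: bijective onto `{0,…,|L|-1}`, join-closures of initial segments
are initial segments, meet-closures of final segments are final segments. -/
def IsCompleteValuation (w : P → ℕ) : Prop :=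
  Set.BijOn (vval w) Set.univ {k | k < Fintype.card (DownSet P)} ∧
  (∀ T, Initial (vval w) T → Initial (vval w) (joinSet T)) ∧
  (∀ T, Final (vval w) T → Final (vval w) (meetSet T))

/-- The complementary order from two linear orders: `x ≤' y` iff `le1 x y` and `le2 y x`. -/
def le'' (le1 le2 : P → P → Prop) (x y : P) : Prop := le1 x y ∧ le2 y x

/-- The number of chains (under the complementary order) with maximum element `y`. -/
noncomputable def chainCount (le1 le2 : P → P → Prop) (y : P) : ℕ :=
  Set.ncard {C : Finset P | y ∈ C ∧ (∀ a ∈ C, le'' le1 le2 a y) ∧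
    ∀ a ∈ C, ∀ b ∈ C, le'' le1 le2 a b ∨ le'' le1 le2 b a}

/-- `{le1, le2}` is a realizer of `P`. -/
def IsRealizer (le1 le2 : P → P → Prop) : Prop :=
  IsLinearOrder P le1 ∧ IsLinearOrder P le2 ∧ ∀ x y : P, x ≤ y ↔ le1 x y ∧ le2 x y

lemma vval_mono (w : P → ℕ) {A B : DownSet P} (hAB : A.1 ⊆ B.1) :
    vval w A ≤ vval w B :=
  Finset.sum_le_sum_of_subset hAB

lemma downset_coe_sup (a b : DownSet P) : (a ⊔ b).1 = a.1 ∪ b.1 := by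
  rw [← Finset.sup_eq_union]; rfl

lemma mem_sup' {S : Finset (DownSet P)} (hS : S.Nonempty) {y : P}
    (hy : y ∈ (S.sup' hS id).1) : ∃ A ∈ S, y ∈ A.1 := by
  refine Finset.sup'_induction hS id
    (p := fun a => ∀ z ∈ a.1, ∃ A ∈ S, z ∈ A.1) ?_ ?_ y hy
  · intro a ha b hb z hz
    rw [downset_coe_sup, Finset.mem_union] at hz
    exact hz.elim (ha z) (hb z)
  · intro a haS z hz
    exact ⟨a, haS, hz⟩

/-- For a complete valuation: if `v(↓x) < v(↓y)` and `x` is not strictly below `y`,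
then `w(x) < w(y)`. -/
theorem stmt3 (w : P → ℕ) (h : IsCompleteValuation w) (x y : P)
    (h1 : vval w (pd x) < vval w (pd y)) (h2 : ¬ x < y) : w x < w y := by
  classical
  obtain ⟨hbij, hjoin, -⟩ := h
  set n := Fintype.card (DownSet P) with hn
  have hinj : Function.Injective (vval w) := fun a b hab =>
    hbij.injOn (Set.mem_univ a) (Set.mem_univ b) hab
  have hlt : ∀ A : DownSet P, vval w A < n := fun A => hbij.mapsTo (Set.mem_univ A)
  have hsurj : ∀ k, k < n → ∃ A : DownSet P, vval w A = k := by
    intro k hk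
    obtain ⟨A, -, hA⟩ := hbij.surjOn hk
    exact ⟨A, hA⟩
  set T : Set (DownSet P) := {A | vval w A < vval w (pd y)} with hTdef
  have hT : Initial (vval w) T := by
    refine ⟨vval w (pd y), Set.ext fun k => ?_⟩
    constructor
    · rintro ⟨A, hA, rfl⟩; exact hA
    · intro hk
      obtain ⟨A, hA⟩ := hsurj k (hk.trans (hlt (pd y)))
      exact ⟨A, by simpa [hTdef, hA] using hk, hA⟩
  obtain ⟨j, hj⟩ := hjoin T hT
  have hy_mem : y ∈ (pd y).1 := by simp [pd]
  have hpd_sub : ∀ {A : DownSet P}, y ∈ A.1 → (pd y).1 ⊆ A.1 := by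
    intro A hyA z hz
    simp only [pd, Finset.mem_filter, Finset.mem_univ, true_and] at hz
    exact A.2 hz hyA
  have hy_not : pd y ∉ joinSet T := by
    rintro ⟨S, hST, hS, heq⟩
    have : y ∈ ((S.sup' hS id).1) := heq ▸ hy_mem
    obtain ⟨A, hAS, hyA⟩ := mem_sup' hS this
    have hAT : A ∈ T := hST hAS
    exact absurd (vval_mono w (hpd_sub hyA)) (not_le.2 hAT)
  have hjle : j ≤ vval w (pd y) := by
    by_contra hc
    push_neg at hc
    have : vval w (pd y) ∈ vval w '' joinSet T := by rw [hj]; exact hc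
    obtain ⟨A, hA, hAv⟩ := this
    exact hy_not (hinj hAv ▸ hA)
  set B : DownSet P := ⟨(pd y).1.erase y, by
    intro a b hba ha
    simp only [Finset.coe_erase, Set.mem_diff, Finset.mem_coe, Set.mem_singleton_iff] at *
    simp only [pd, Finset.mem_filter, Finset.mem_univ, true_and] at *
    refine ⟨hba.trans ha.1, fun hay => ?_⟩
    exact ha.2 (le_antisymm ha.1 (hay ▸ hba))⟩ with hBdef
  have hvB : vval w B + w y = vval w (pd y) := Finset.sum_erase_add _ _ hy_mem
  have hBne : B ≠ pd y := by
    intro hBec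
    have : y ∈ B.1 := hBec ▸ hy_mem
    simp [hBdef] at this
  have hBT : B ∈ T := by
    have hle : vval w B ≤ vval w (pd y) := vval_mono w (Finset.erase_subset _ _)
    exact lt_of_le_of_ne hle (fun hc => hBne (hinj hc))
  have hJmem : pd x ⊔ B ∈ joinSet T := by
    refine ⟨{pd x, B}, ?_, ⟨pd x, by simp⟩, ?_⟩
    · intro A hA
      simp only [Finset.coe_insert, Finset.coe_singleton, Set.mem_insert_iff,
        Set.mem_singleton_iff] at hA
      rcases hA with rfl | rfl
      · exact h1
      · exact hBT
    · have : ({pd x, B} : Finset (DownSet P)).sup' (Finset.insert_nonempty _ _) id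
          = id (pd x) ⊔ ({B} : Finset (DownSet P)).sup' (Finset.singleton_nonempty B) id :=
        Finset.sup'_insert (Finset.singleton_nonempty B) id
      rw [Finset.sup'_singleton] at this
      exact this.symm
  have hJlt : vval w (pd x ⊔ B) < vval w (pd y) := by
    have : vval w (pd x ⊔ B) ∈ vval w '' joinSet T := ⟨_, hJmem, rfl⟩
    rw [hj] at this
    exact lt_of_lt_of_le this hjle
  have hx_mem : x ∈ (pd x).1 := by simp [pd]
  have hxB : x ∉ B.1 := by
    simp only [hBdef, Finset.mem_erase, pd, Finset.mem_filter, Finset.mem_univ, true_and]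
    rintro ⟨hne, hle⟩
    exact h2 (lt_of_le_of_ne hle hne)
  have hmod : vval w (pd x ⊔ B) + ∑ z ∈ (pd x).1 ∩ B.1, w z = vval w (pd x) + vval w B := by
    rw [show vval w (pd x ⊔ B) = ∑ z ∈ (pd x).1 ∪ B.1, w z from by
      unfold vval; rw [downset_coe_sup]]
    exact Finset.sum_union_inter
  have hinter : (∑ z ∈ (pd x).1 ∩ B.1, w z) + w x ≤ vval w (pd x) := by
    have hsub : (pd x).1 ∩ B.1 ⊆ (pd x).1.erase x := by
      intro z hz
      rw [Finset.mem_inter] at hz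
      rw [Finset.mem_erase]
      exact ⟨fun hc => hxB (hc ▸ hz.2), hz.1⟩
    calc (∑ z ∈ (pd x).1 ∩ B.1, w z) + w x
        ≤ (∑ z ∈ (pd x).1.erase x, w z) + w x :=
          Nat.add_le_add_right (Finset.sum_le_sum_of_subset hsub) _
      _ = vval w (pd x) := Finset.sum_erase_add _ _ hx_mem
  omega
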